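/- Let n ≥ 3 and let τ be an integer with n−1 ≤ τ ≤ 2n−3. Let S be the set of n×n row-stochastic matrices Q with Q(j,k) = 0 whenever |j−k| > 1 (strategies conforming to the line graph on nodes 1,…,n). Suppose P* ∈ S is irreducible (its transition digraph, with edges (a,b) whenever P*(a,b) > 0, is strongly connected) and P* maximizes the worst-case capture probability over S, i.e., min_{i,j} Σ_{t=1}^{τ} F*_t(i,j) ≥ min_{i,j} Σ_{t=1}^{τ} F^Q_t(i,j) for every Q ∈ S. Then Σ_{t=1}^{τ} F*_t(1,n) = Σ_{t=1}^{τ} F*_t(n,1), i.e., the optimal line-graph strategy equalizes the end-to-end capture probabilities in the two directions. -/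

import Mathlib

/-- First-hitting-time probability matrices: `hitF P t` is `F_{t+1}`, i.e.
`F_1 = P` and `F_{k+1} = P (F_k - Diag(F_k))`. -/
def hitF {α : Type*} [Fintype α] [DecidableEq α] (P : Matrix α α ℝ) : ℕ → Matrix α α ℝ
  | 0 => P
  | k + 1 => P * (hitF P k - Matrix.diagonal fun i => hitF P k i i)


noncomputable def Scap {α : Type*} [Fintype α] [DecidableEq α] (P : Matrix α α ℝ) (T : ℕ) :
    Matrix α α ℝ := ∑ t ∈ Finset.range T, hitF P t

lemma Scap_succ {α : Type*} [Fintype α] [DecidableEq α] (P : Matrix α α ℝ) (T : ℕ) (i j : α) :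
    Scap P (T + 1) i j = ∑ l, P i l * (if l = j then 1 else Scap P T l j) := by
  have hD : (Matrix.diagonal fun i => Scap P T i i)
      = ∑ t ∈ Finset.range T, Matrix.diagonal fun i => hitF P t i i := by
    ext a b
    simp only [Matrix.sum_apply, Matrix.diagonal_apply, Scap, Matrix.sum_apply]
    split <;> simp
  have h1 : Scap P (T + 1) = P + P * (Scap P T - Matrix.diagonal fun i => Scap P T i i) := by
    have e1 : Scap P (T+1)
        = P + ∑ t ∈ Finset.range T, P * (hitF P t - Matrix.diagonal fun i => hitF P t i i) := by
      unfold Scap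
      rw [Finset.sum_range_succ']
      rw [add_comm]
      congr 1
    rw [e1, ← Matrix.mul_sum, Finset.sum_sub_distrib, ← hD]
    rfl
  rw [h1]
  simp only [Matrix.add_apply, Matrix.mul_apply, Matrix.sub_apply, Matrix.diagonal_apply]
  have h3 : ∀ l, P i l * (if l = j then (1:ℝ) else Scap P T l j)
      = P i l * (Scap P T l j - if l = j then Scap P T l l else 0) + if l = j then P i j else 0 := by
    intro l
    by_cases h : l = j <;> simp [h] <;> ring
  rw [Finset.sum_congr rfl (fun l _ => h3 l), Finset.sum_add_distrib, Finset.sum_ite_eq']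
  simp [add_comm]

lemma Scap_zero {α : Type*} [Fintype α] [DecidableEq α] (P : Matrix α α ℝ) (i j : α) :
    Scap P 0 i j = 0 := by simp [Scap]

section basic
variable {α : Type*} [Fintype α] [DecidableEq α] {P : Matrix α α ℝ}

lemma Scap_nonneg (hP0 : ∀ a b, 0 ≤ P a b) : ∀ T i j, 0 ≤ Scap P T i j := by
  intro T
  induction T with
  | zero => intro i j; simp [Scap_zero]
  | succ T ih =>
    intro i j
    rw [Scap_succ]
    apply Finset.sum_nonneg
    intro l _
    apply mul_nonneg (hP0 i l)
    split
    · norm_num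
    · exact ih l j

lemma Scap_le_one (hP0 : ∀ a b, 0 ≤ P a b) (hP1 : ∀ a, ∑ b, P a b = 1) :
    ∀ T i j, Scap P T i j ≤ 1 := by
  intro T
  induction T with
  | zero => intro i j; simp [Scap_zero]
  | succ T ih =>
    intro i j
    rw [Scap_succ]
    have step : ∑ l, P i l * (if l = j then 1 else Scap P T l j) ≤ ∑ l, P i l := by
      apply Finset.sum_le_sum
      intro l _
      nth_rewrite 2 [← mul_one (P i l)]
      have hb : (if l = j then (1:ℝ) else Scap P T l j) ≤ 1 := by
        split
        · exact le_rfl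
        · exact ih l j
      exact mul_le_mul_of_nonneg_left hb (hP0 i l)
    rw [hP1 i] at step
    exact step

lemma Scap_mono_succ (hP0 : ∀ a b, 0 ≤ P a b) :
    ∀ T i j, Scap P T i j ≤ Scap P (T + 1) i j := by
  intro T
  induction T with
  | zero =>
    intro i j; rw [Scap_zero]
    exact Scap_nonneg hP0 1 i j
  | succ T ih =>
    intro i j
    rw [Scap_succ, Scap_succ]
    apply Finset.sum_le_sum
    intro l _
    have hb : (if l = j then (1:ℝ) else Scap P T l j) ≤ (if l = j then 1 else Scap P (T+1) l j) := by
      split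
      · exact le_rfl
      · exact ih l j
    exact mul_le_mul_of_nonneg_left hb (hP0 i l)

lemma Scap_mono (hP0 : ∀ a b, 0 ≤ P a b) {T T' : ℕ} (h : T ≤ T') (i j : α) :
    Scap P T i j ≤ Scap P T' i j := by
  induction T' with
  | zero =>
    have : T = 0 := by omega
    subst this; exact le_rfl
  | succ T' ih =>
    rcases Nat.lt_or_ge T (T'+1) with h' | h'
    · exact le_trans (ih (by omega)) (Scap_mono_succ hP0 T' i j)
    · have : T = T' + 1 := by omega
      subst this; exact le_rfl

end basic

section flip
variable {n : ℕ}

lemma hitF_rev (P : Matrix (Fin n) (Fin n) ℝ) :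
    ∀ t, hitF (P.submatrix Fin.rev Fin.rev) t = (hitF P t).submatrix Fin.rev Fin.rev := by
  intro t
  induction t with
  | zero => rfl
  | succ t ih =>
    show P.submatrix Fin.rev Fin.rev *
        (hitF (P.submatrix Fin.rev Fin.rev) t -
          Matrix.diagonal fun i => hitF (P.submatrix Fin.rev Fin.rev) t i i)
      = (P * (hitF P t - Matrix.diagonal fun i => hitF P t i i)).submatrix Fin.rev Fin.rev
    rw [ih]
    have hd : (Matrix.diagonal fun i : Fin n => (hitF P t).submatrix Fin.rev Fin.rev i i)
        = (Matrix.diagonal fun i => hitF P t i i).submatrix Fin.rev Fin.rev := by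
      ext a b
      simp only [Matrix.diagonal_apply, Matrix.submatrix_apply]
      by_cases h : a = b
      · simp [h]
      · rw [if_neg h, if_neg (fun hc => h (Fin.rev_injective hc))]
    rw [hd]
    have hsub : (hitF P t).submatrix Fin.rev Fin.rev -
        (Matrix.diagonal fun i => hitF P t i i).submatrix Fin.rev Fin.rev
        = (hitF P t - Matrix.diagonal fun i => hitF P t i i).submatrix Fin.rev Fin.rev := by
      ext a b; simp [Matrix.submatrix_apply]
    rw [hsub]
    have : (Fin.rev : Fin n → Fin n) = ⇑(Fin.revPerm) := rfl
    rw [this, Matrix.submatrix_mul_equiv]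

lemma Scap_rev (P : Matrix (Fin n) (Fin n) ℝ) (T : ℕ) (i j : Fin n) :
    Scap (P.submatrix Fin.rev Fin.rev) T i j = Scap P T i.rev j.rev := by
  unfold Scap
  simp only [Matrix.sum_apply]
  apply Finset.sum_congr rfl
  intro t _
  rw [hitF_rev]
  rfl

lemma rev_hP0 {P : Matrix (Fin n) (Fin n) ℝ} (hP0 : ∀ a b, 0 ≤ P a b) :
    ∀ a b, 0 ≤ (P.submatrix Fin.rev Fin.rev) a b := fun a b => hP0 _ _

lemma rev_hP1 {P : Matrix (Fin n) (Fin n) ℝ} (hP1 : ∀ a, ∑ b, P a b = 1) :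
    ∀ a, ∑ b, (P.submatrix Fin.rev Fin.rev) a b = 1 := by
  intro a
  rw [← hP1 a.rev]
  exact Fintype.sum_equiv Fin.revPerm _ _ (fun b => rfl)

lemma rev_hline {P : Matrix (Fin n) (Fin n) ℝ}
    (hline : ∀ j k : Fin n, (j.val + 1 < k.val ∨ k.val + 1 < j.val) → P j k = 0) :
    ∀ j k : Fin n, (j.val + 1 < k.val ∨ k.val + 1 < j.val) →
      (P.submatrix Fin.rev Fin.rev) j k = 0 := by
  intro j k h
  apply hline
  have hj := j.isLt
  have hk := k.isLt
  rw [Fin.val_rev, Fin.val_rev]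
  omega

lemma rev_hpos {P : Matrix (Fin n) (Fin n) ℝ}
    (hpos : ∀ i j : Fin n, i.val + 1 = j.val → 0 < P i j ∧ 0 < P j i) :
    ∀ i j : Fin n, i.val + 1 = j.val →
      0 < (P.submatrix Fin.rev Fin.rev) i j ∧ 0 < (P.submatrix Fin.rev Fin.rev) j i := by
  intro i j h
  have hj := j.isLt
  have hrev : j.rev.val + 1 = i.rev.val := by
    rw [Fin.val_rev, Fin.val_rev]; omega
  have := hpos j.rev i.rev hrev
  exact ⟨this.2, this.1⟩

end flip

section other
variable {n : ℕ}

/-- entrywise monotonicity -/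
lemma Scap_le_Scap {P Q : Matrix (Fin n) (Fin n) ℝ} (hP0 : ∀ a b, 0 ≤ P a b)
    (hle : ∀ a b, P a b ≤ Q a b) : ∀ T i j, Scap P T i j ≤ Scap Q T i j := by
  intro T
  induction T with
  | zero => intro i j; rw [Scap_zero, Scap_zero]
  | succ T ih =>
    intro i j
    rw [Scap_succ, Scap_succ]
    apply Finset.sum_le_sum
    intro l _
    have h1 : (if l = j then (1:ℝ) else Scap P T l j) ≤ (if l = j then 1 else Scap Q T l j) := by
      split
      · exact le_rfl
      · exact ih l j
    have h2 : (0:ℝ) ≤ (if l = j then (1:ℝ) else Scap P T l j) := by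
      split
      · norm_num
      · exact Scap_nonneg hP0 T l j
    exact mul_le_mul (hle i l) h1 h2 (le_trans (hP0 i l) (hle i l))

/-- scaling lower bound -/
lemma Scap_smul {P : Matrix (Fin n) (Fin n) ℝ} (hP0 : ∀ a b, 0 ≤ P a b)
    {c : ℝ} (hc0 : 0 ≤ c) (hc1 : c ≤ 1) :
    ∀ T i j, c ^ T * Scap P T i j ≤ Scap (Matrix.of fun a b => c * P a b) T i j := by
  intro T
  induction T with
  | zero => intro i j; rw [Scap_zero, Scap_zero, mul_zero]
  | succ T ih =>
    intro i j
    rw [Scap_succ, Scap_succ, Finset.mul_sum]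
    apply Finset.sum_le_sum
    intro l _
    have he : c ^ (T+1) * (P i l * (if l = j then (1:ℝ) else Scap P T l j))
        = (c * P i l) * (c ^ T * (if l = j then 1 else Scap P T l j)) := by ring
    rw [he]
    show (c * P i l) * _ ≤ (Matrix.of fun a b => c * P a b) i l * _
    have hco : (Matrix.of fun a b => c * P a b) i l = c * P i l := rfl
    rw [hco]
    apply mul_le_mul_of_nonneg_left _ (mul_nonneg hc0 (hP0 i l))
    split
    · rw [mul_one]; exact pow_le_one₀ hc0 hc1
    · exact ih l j

end other

section line
variable {n : ℕ} {P : Matrix (Fin n) (Fin n) ℝ}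

lemma mulsum_le (hP0 : ∀ a b, 0 ≤ P a b) (i : Fin n) {f g : Fin n → ℝ}
    (h : ∀ l, P i l ≠ 0 → f l ≤ g l) :
    ∑ l, P i l * f l ≤ ∑ l, P i l * g l :=
  Finset.sum_le_sum fun l _ => by
    by_cases hl : P i l = 0
    · simp [hl]
    · exact mul_le_mul_of_nonneg_left (h l hl) (hP0 i l)

lemma mulsum_const (hP1 : ∀ a, ∑ b, P a b = 1) (i : Fin n) (c : ℝ) :
    ∑ l, P i l * c = c := by rw [← Finset.sum_mul, hP1 i, one_mul]

variable (hP0 : ∀ a b, 0 ≤ P a b) (hP1 : ∀ a, ∑ b, P a b = 1)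
  (hline : ∀ j k : Fin n, (j.val + 1 < k.val ∨ k.val + 1 < j.val) → P j k = 0)

include hline in
lemma supp (i l : Fin n) (h : P i l ≠ 0) : l.val ≤ i.val + 1 ∧ i.val ≤ l.val + 1 := by
  by_contra hc
  push_neg at hc
  rcases Nat.lt_or_ge (i.val + 1) l.val with h' | h'
  · exact h (hline i l (Or.inl h'))
  · exact h (hline i l (Or.inr (by omega)))

include hP0 hP1 hline in
/-- start monotonicity towards a right target -/
lemma lemM : ∀ T (i i' j : Fin n), i.val ≤ i'.val → i'.val < j.val →
    Scap P T i j ≤ Scap P T i' j := by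
  intro T
  induction T with
  | zero => intro i i' j _ _; rw [Scap_zero, Scap_zero]
  | succ T ih =>
    intro i i' j hii' hj
    rcases Nat.eq_or_lt_of_le hii' with he | hlt
    · have : i = i' := Fin.ext he
      subst this; exact le_rfl
    rw [Scap_succ]
    have step1 : ∑ l, P i l * (if l = j then 1 else Scap P T l j)
        ≤ ∑ l, P i l * Scap P T i' j := by
      apply mulsum_le hP0
      intro l hl
      have hs := supp hline i l hl
      have hlj : l ≠ j := by
        intro h; subst h; omega
      rw [if_neg hlj]
      exact ih l i' j (by omega) hj
    rw [mulsum_const hP1] at step1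
    exact le_trans step1 (Scap_mono_succ hP0 T i' j)

include hP0 hP1 hline in
/-- target monotonicity: farther right target is harder (from the left) -/
lemma lemA : ∀ T (i j k : Fin n), i.val < j.val → j.val ≤ k.val →
    Scap P T i k ≤ Scap P T i j := by
  intro T
  induction T with
  | zero => intro i j k _ _; rw [Scap_zero, Scap_zero]
  | succ T ih =>
    intro i j k hij hjk
    rw [Scap_succ, Scap_succ]
    apply mulsum_le hP0
    intro l hl
    have hs := supp hline i l hl
    by_cases hlj : l = j
    · subst hlj
      rw [if_pos rfl]
      split
      · exact le_rfl
      · exact Scap_le_one hP0 hP1 T l k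
    · have hlk : l ≠ k := by
        intro h; subst h
        have : l.val < j.val := by omega
        omega
      rw [if_neg hlj, if_neg hlk]
      have hlvj : l.val < j.val := by
        have := Fin.val_ne_of_ne hlj
        omega
      exact ih l j k hlvj hjk

include hP0 hP1 hline in
/-- one step of time-space tradeoff -/
lemma lemB : ∀ T (a j j' : Fin n), a.val < j.val → j'.val = j.val + 1 →
    Scap P (T + 1) a j' ≤ Scap P T a j := by
  intro T
  induction T with
  | zero =>
    intro a j j' haj hj'
    rw [Scap_succ, Scap_zero]
    have : ∀ l : Fin n, P a l * (if l = j' then (1:ℝ) else Scap P 0 l j') = 0 := by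
      intro l
      by_cases hl : l = j'
      · subst hl
        rw [hline a l (Or.inl (by omega))]
        ring
      · rw [if_neg hl, Scap_zero]
        ring
    rw [Finset.sum_congr rfl (fun l _ => this l)]
    simp
  | succ T ih =>
    intro a j j' haj hj'
    rw [Scap_succ, Scap_succ P T]
    apply mulsum_le hP0
    intro l hl
    have hs := supp hline a l hl
    have hlj' : l ≠ j' := by
      intro h; subst h; omega
    rw [if_neg hlj']
    by_cases hlj : l = j
    · subst hlj
      rw [if_pos rfl]
      exact Scap_le_one hP0 hP1 (T+1) l j'
    · rw [if_neg hlj]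
      have : l.val < j.val := by
        have := Fin.val_ne_of_ne hlj
        omega
      exact ih l j j' this hj'

include hP0 hP1 hline in
/-- one step closer with one less time unit -/
lemma lemB' : ∀ T (a a' j : Fin n), a.val + 1 = a'.val → a'.val < j.val →
    Scap P (T + 1) a j ≤ Scap P T a' j := by
  intro T a a' j ha hj
  rw [Scap_succ]
  have step1 : ∑ l, P a l * (if l = j then 1 else Scap P T l j)
      ≤ ∑ l, P a l * Scap P T a' j := by
    apply mulsum_le hP0
    intro l hl
    have hs := supp hline a l hl
    have hlj : l ≠ j := by intro h; subst h; omega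
    rw [if_neg hlj]
    exact lemM hP0 hP1 hline T l a' j (by omega) hj
  rw [mulsum_const hP1] at step1
  exact step1

end line

section line2
variable {n : ℕ} {P : Matrix (Fin n) (Fin n) ℝ}
variable (hP0 : ∀ a b, 0 ≤ P a b) (hP1 : ∀ a, ∑ b, P a b = 1)
  (hline : ∀ j k : Fin n, (j.val + 1 < k.val ∨ k.val + 1 < j.val) → P j k = 0)
  (hpos : ∀ i j : Fin n, i.val + 1 = j.val → 0 < P i j ∧ 0 < P j i)

include hP0 hP1 hpos in
lemma lemLt1 (hn : 3 ≤ n) : ∀ T (v last : Fin n), last.val = n - 1 → v.val + 1 ≤ n - 1 →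
    Scap P T v last < 1 := by
  intro T
  induction T with
  | zero => intro v last _ _; rw [Scap_zero]; norm_num
  | succ T ih =>
    intro v last hlast hv
    obtain ⟨w, hvw, hwb⟩ : ∃ w : Fin n, 0 < P v w ∧ w.val + 1 ≤ n - 1 := by
      by_cases hcase : v.val + 2 ≤ n - 1
      · exact ⟨⟨v.val + 1, by omega⟩, (hpos v ⟨v.val + 1, by omega⟩ rfl).1,
          by show v.val + 1 + 1 ≤ n - 1; omega⟩
      · exact ⟨⟨n - 3, by omega⟩, (hpos ⟨n - 3, by omega⟩ v (by show n - 3 + 1 = v.val; omega)).2,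
          by show n - 3 + 1 ≤ n - 1; omega⟩
    have hwlast : w ≠ last := by
      intro h; subst h; omega
    rw [Scap_succ]
    rw [← Finset.add_sum_erase Finset.univ _ (Finset.mem_univ w)]
    have h2 : P v w * (if w = last then (1:ℝ) else Scap P T w last) < P v w := by
      rw [if_neg hwlast]
      calc P v w * Scap P T w last < P v w * 1 :=
            mul_lt_mul_of_pos_left (ih w last hlast hwb) hvw
        _ = P v w := mul_one _
    have h3 : ∑ l ∈ Finset.univ.erase w, P v l * (if l = last then (1:ℝ) else Scap P T l last)
        ≤ ∑ l ∈ Finset.univ.erase w, P v l := by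
      apply Finset.sum_le_sum
      intro l _
      apply mul_le_of_le_one_right (hP0 v l)
      split
      · exact le_rfl
      · exact Scap_le_one hP0 hP1 T l last
    have h4 : P v w + ∑ l ∈ Finset.univ.erase w, P v l = 1 := by
      rw [Finset.add_sum_erase Finset.univ _ (Finset.mem_univ w)]
      exact hP1 v
    linarith

include hline in
lemma crossUp : ∀ (m : ℕ) (v : ℕ → Fin n) (c : ℕ), (v 0).val ≤ c → c < (v m).val →
    (∀ t < m, 0 < P (v t) (v (t + 1))) → ∃ t < m, (v t).val ≤ c ∧ c < (v (t + 1)).val := by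
  intro m
  induction m with
  | zero => intro v c h1 h2 _; omega
  | succ m ih =>
    intro v c h0 hm hp
    by_cases h1 : (v 1).val ≤ c
    · obtain ⟨t, ht, h⟩ := ih (fun t => v (t + 1)) c h1 hm (fun t ht => hp (t + 1) (by omega))
      exact ⟨t + 1, by omega, h⟩
    · exact ⟨0, by omega, h0, by rw [Nat.zero_add]; omega⟩

include hline in
lemma crossDown : ∀ (m : ℕ) (v : ℕ → Fin n) (c : ℕ), c < (v 0).val → (v m).val ≤ c →
    (∀ t < m, 0 < P (v t) (v (t + 1))) → ∃ t < m, c < (v t).val ∧ (v (t + 1)).val ≤ c := by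
  intro m
  induction m with
  | zero => intro v c h1 h2 _; omega
  | succ m ih =>
    intro v c h0 hm hp
    by_cases h1 : c < (v 1).val
    · obtain ⟨t, ht, h⟩ := ih (fun t => v (t + 1)) c h1 hm (fun t ht => hp (t + 1) (by omega))
      exact ⟨t + 1, by omega, h⟩
    · exact ⟨0, by omega, h0, by rw [Nat.zero_add]; omega⟩

include hline in
lemma hpos_of_hirr (hirr : ∀ a b : Fin n, a ≠ b → ∃ m : ℕ, ∃ v : ℕ → Fin n,
      v 0 = a ∧ v m = b ∧ ∀ t < m, 0 < P (v t) (v (t + 1))) :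
    ∀ i j : Fin n, i.val + 1 = j.val → 0 < P i j ∧ 0 < P j i := by
  intro i j hij
  have hne : i ≠ j := by intro h; subst h; omega
  constructor
  · obtain ⟨m, v, h0, hm, hp⟩ := hirr i j hne
    obtain ⟨t, ht, hle, hgt⟩ := crossUp hline m v i.val (by rw [h0]) (by rw [hm]; omega) hp
    have hPt := hp t ht
    have hs := supp hline _ _ (ne_of_gt hPt)
    have e1 : v t = i := Fin.ext (by omega)
    have e2 : v (t + 1) = j := Fin.ext (by omega)
    rwa [e1, e2] at hPt
  · obtain ⟨m, v, h0, hm, hp⟩ := hirr j i hne.symm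
    obtain ⟨t, ht, hgt, hle⟩ := crossDown hline m v i.val (by rw [h0]; omega) (by rw [hm]) hp
    have hPt := hp t ht
    have hs := supp hline _ _ (ne_of_gt hPt)
    have e1 : v t = j := Fin.ext (by omega)
    have e2 : v (t + 1) = i := Fin.ext (by omega)
    rwa [e1, e2] at hPt

include hP0 hP1 hline in
lemma lemBdown {τ : ℕ} (hτ : n - 1 ≤ τ) (first last : Fin n) (hf : first.val = 0)
    (hl : last.val = n - 1) :
    ∀ d, d ≤ n - 2 → ∀ j : Fin n, j.val = n - 1 - d →
      Scap P τ first last ≤ Scap P (τ - d) first j := by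
  intro d
  induction d with
  | zero =>
    intro _ j hj
    have : j = last := Fin.ext (by omega)
    subst this
    exact le_of_eq rfl
  | succ d ih =>
    intro hd j hj
    have hn2 : 2 ≤ n := by omega
    obtain ⟨j1, hj1⟩ : ∃ j1 : Fin n, j1.val = n - 1 - d := ⟨⟨n - 1 - d, by omega⟩, rfl⟩
    have step := lemB hP0 hP1 hline (τ - (d + 1)) first j j1 (by omega) (by omega)
    have harith : τ - (d + 1) + 1 = τ - d := by omega
    rw [harith] at step
    exact le_trans (ih (by omega) j1 hj1) step

include hP0 hP1 hline in
lemma offdiag {τ : ℕ} (hn : 3 ≤ n) (hτ : n - 1 ≤ τ) (first last : Fin n) (hf : first.val = 0)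
    (hl : last.val = n - 1) (i j : Fin n) (hij : i.val < j.val) :
    Scap P τ first last ≤ Scap P τ i j := by
  calc Scap P τ first last ≤ Scap P τ first j :=
        lemA hP0 hP1 hline τ first j last (by omega) (by omega)
    _ ≤ Scap P τ i j := by
        rcases Nat.eq_or_lt_of_le (Nat.zero_le i.val) with h | h
        · have : first = i := Fin.ext (by omega)
          rw [this]
        · exact lemM hP0 hP1 hline τ first i j (by omega) hij

include hP0 hP1 hline in
lemma diagL {τ : ℕ} (hn : 3 ≤ n) (hτ : n - 1 ≤ τ) (first last : Fin n) (hf : first.val = 0)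
    (hl : last.val = n - 1) (l i : Fin n) (hli : l.val + 1 = i.val) :
    Scap P τ first last ≤ Scap P (τ - 1) l i := by
  by_cases hi : i.val = n - 1
  · -- i = last
    have hilast : i = last := Fin.ext (by omega)
    subst hilast
    obtain ⟨sec, hsec⟩ : ∃ s : Fin n, s.val = 1 := ⟨⟨1, by omega⟩, rfl⟩
    have h1 : Scap P ((τ - 1) + 1) first i ≤ Scap P (τ - 1) sec i :=
      lemB' hP0 hP1 hline (τ - 1) first sec i (by omega) (by omega)
    have harith : τ - 1 + 1 = τ := by omega
    rw [harith] at h1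
    exact le_trans h1 (lemM hP0 hP1 hline (τ - 1) sec l i (by omega) (by omega))
  · have hd : 1 ≤ n - 1 - i.val ∧ n - 1 - i.val ≤ n - 2 := by
      have := i.isLt
      omega
    have h1 := lemBdown hP0 hP1 hline hτ first last hf hl (n - 1 - i.val) hd.2 i (by omega)
    have h2 : Scap P (τ - (n - 1 - i.val)) first i ≤ Scap P (τ - 1) first i :=
      Scap_mono hP0 (by omega) first i
    have h3 : Scap P (τ - 1) first i ≤ Scap P (τ - 1) l i := by
      rcases Nat.eq_or_lt_of_le (Nat.zero_le l.val) with h | h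
      · have : first = l := Fin.ext (by omega)
        rw [this]
      · exact lemM hP0 hP1 hline (τ - 1) first l i (by omega) (by omega)
    exact le_trans h1 (le_trans h2 h3)

include hP0 hP1 hline in
lemma step1 {τ : ℕ} (hn : 3 ≤ n) (hτ : n - 1 ≤ τ) (first last : Fin n) (hf : first.val = 0)
    (hl : last.val = n - 1) (i j : Fin n) :
    min (Scap P τ first last) (Scap P τ last first) ≤ Scap P τ i j := by
  have hfr : first.rev = last := Fin.ext (by rw [Fin.val_rev]; omega)
  have hlr : last.rev = first := Fin.ext (by rw [Fin.val_rev]; omega)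
  have hrevS : ∀ T (a b : Fin n),
      Scap (P.submatrix Fin.rev Fin.rev) T a b = Scap P T a.rev b.rev := Scap_rev P
  have hC2 : Scap (P.submatrix Fin.rev Fin.rev) τ first last = Scap P τ last first := by
    rw [hrevS, hfr, hlr]
  rcases Nat.lt_trichotomy i.val j.val with h | h | h
  · exact le_trans (min_le_left _ _) (offdiag hP0 hP1 hline hn hτ first last hf hl i j h)
  · -- diagonal
    have hij : i = j := Fin.ext h
    subst hij
    obtain ⟨τ', hτ'⟩ : ∃ τ', τ = τ' + 1 := ⟨τ - 1, by omega⟩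
    subst hτ'
    have key : ∀ l, P i l ≠ 0 →
        min (Scap P (τ' + 1) first last) (Scap P (τ' + 1) last first)
          ≤ (if l = i then 1 else Scap P τ' l i) := by
      intro l hl0
      have hs := supp hline i l hl0
      by_cases hli : l = i
      · rw [if_pos hli]
        exact le_trans (min_le_left _ _) (Scap_le_one hP0 hP1 (τ' + 1) first last)
      · rw [if_neg hli]
        have hlv : l.val ≠ i.val := Fin.val_ne_of_ne hli
        rcases Nat.lt_or_ge l.val i.val with hlt | hge
        · -- l = i - 1
          have := diagL hP0 hP1 hline hn hτ first last hf hl l i (by omega)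
          simp only [Nat.add_sub_cancel] at this
          exact le_trans (min_le_left _ _) this
        · -- l = i + 1 : use reversed matrix
          have hrevline := rev_hline hline
          have hrev0 := rev_hP0 hP0
          have hrev1 := rev_hP1 hP1
          have hmain := diagL hrev0 hrev1 hrevline hn hτ first last hf hl l.rev i.rev
            (by rw [Fin.val_rev, Fin.val_rev]; have := l.isLt; omega)
          rw [hrevS, hrevS, hfr, hlr, Fin.rev_rev, Fin.rev_rev] at hmain
          simp only [Nat.add_sub_cancel] at hmain
          exact le_trans (min_le_right _ _) hmain
    have final : ∑ l, P i l * min (Scap P (τ' + 1) first last) (Scap P (τ' + 1) last first)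
        ≤ ∑ l, P i l * (if l = i then 1 else Scap P τ' l i) := mulsum_le hP0 i key
    rw [mulsum_const hP1] at final
    calc min (Scap P (τ' + 1) first last) (Scap P (τ' + 1) last first)
        ≤ ∑ l, P i l * (if l = i then 1 else Scap P τ' l i) := final
      _ = Scap P (τ' + 1) i i := (Scap_succ P τ' i i).symm
  · -- i > j : reversed
    have hrev0 := rev_hP0 hP0
    have hrev1 := rev_hP1 hP1
    have hrevline := rev_hline hline
    have hmain := offdiag hrev0 hrev1 hrevline hn hτ first last hf hl i.rev j.rev
      (by rw [Fin.val_rev, Fin.val_rev]; have := i.isLt; have := j.isLt; omega)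
    rw [hrevS, hrevS, hfr, hlr, Fin.rev_rev, Fin.rev_rev] at hmain
    exact le_trans (min_le_right _ _) hmain

end line2

def pert {n : ℕ} (P : Matrix (Fin n) (Fin n) ℝ) (r last : Fin n) (ε : ℝ) :
    Matrix (Fin n) (Fin n) ℝ :=
  Matrix.of fun a b => if a = r then (1 - ε) * P a b + (if b = last then ε else 0) else P a b

section pert
variable {n : ℕ} {P : Matrix (Fin n) (Fin n) ℝ} {r last : Fin n} {ε : ℝ}
variable (hP0 : ∀ a b, 0 ≤ P a b) (hP1 : ∀ a, ∑ b, P a b = 1)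
  (hline : ∀ j k : Fin n, (j.val + 1 < k.val ∨ k.val + 1 < j.val) → P j k = 0)
  (hpos : ∀ i j : Fin n, i.val + 1 = j.val → 0 < P i j ∧ 0 < P j i)
  (hn : 3 ≤ n) (hr : r.val = n - 2) (hl : last.val = n - 1)
  (hε0 : 0 < ε) (hε1 : ε ≤ 1)

lemma pert_ne {a : Fin n} (ha : a ≠ r) (b : Fin n) : pert P r last ε a b = P a b := by
  simp [pert, if_neg ha]

lemma pert_r (b : Fin n) :
    pert P r last ε r b = (1 - ε) * P r b + (if b = last then ε else 0) := by
  simp [pert]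

include hP0 hε0 hε1 in
lemma pert_nonneg : ∀ a b, 0 ≤ pert P r last ε a b := by
  intro a b
  by_cases ha : a = r
  · subst ha
    rw [pert_r]
    have h1 : 0 ≤ (1 - ε) * P a b := mul_nonneg (by linarith) (hP0 a b)
    have h2 : 0 ≤ (if b = last then ε else 0) := by split <;> linarith
    linarith
  · rw [pert_ne ha]; exact hP0 a b

lemma pert_expand (X : Fin n → ℝ) :
    ∑ l, pert P r last ε r l * X l = (1 - ε) * (∑ l, P r l * X l) + ε * X last := by
  have h : ∀ l, pert P r last ε r l * X l
      = (1 - ε) * (P r l * X l) + (if l = last then ε * X l else 0) := by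
    intro l
    rw [pert_r]
    split <;> ring
  rw [Finset.sum_congr rfl (fun l _ => h l), Finset.sum_add_distrib, Finset.sum_ite_eq',
    if_pos (Finset.mem_univ last), Finset.mul_sum]

include hP1 in
lemma pert_row : ∀ a, ∑ b, pert P r last ε a b = 1 := by
  intro a
  by_cases ha : a = r
  · rw [show a = r from ha]
    have h := pert_expand (P := P) (last := last) (ε := ε) (r := r) (fun _ => (1:ℝ))
    have h2 : ∑ b, pert P r last ε r b = ∑ b, pert P r last ε r b * 1 := by simp
    rw [h2, h]
    simp only [mul_one]
    rw [hP1 r]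
    ring
  · rw [Finset.sum_congr rfl (fun b _ => pert_ne ha b)]
    exact hP1 a

include hline hr hl hn in
lemma pert_line : ∀ j k : Fin n, (j.val + 1 < k.val ∨ k.val + 1 < j.val) →
    pert P r last ε j k = 0 := by
  intro j k h
  by_cases hj : j = r
  · subst hj
    rw [pert_r]
    have hkl : k ≠ last := by
      intro hk; subst hk
      omega
    rw [if_neg hkl, hline _ _ h]
    ring
  · rw [pert_ne hj]
    exact hline _ _ h

include hP0 hε0 hε1 in
lemma pert_ge : ∀ a b, (Matrix.of fun a b => (1 - ε) * P a b) a b ≤ pert P r last ε a b := by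
  intro a b
  show (1 - ε) * P a b ≤ _
  by_cases ha : a = r
  · subst ha
    rw [pert_r]
    have : 0 ≤ (if b = last then ε else 0) := by split <;> linarith
    linarith
  · rw [pert_ne ha]
    nlinarith [hP0 a b]

include hP0 hP1 hε0 hε1 in
lemma pert_Dnonneg : ∀ T i, Scap P T i last ≤ Scap (pert P r last ε) T i last := by
  intro T
  induction T with
  | zero => intro i; rw [Scap_zero, Scap_zero]
  | succ T ih =>
    intro i
    have hhle : ∀ l, (if l = last then (1:ℝ) else Scap P T l last)
        ≤ (if l = last then 1 else Scap (pert P r last ε) T l last) := by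
      intro l
      split
      · exact le_rfl
      · exact ih l
    by_cases hi : i = r
    · rw [show i = r from hi]
      rw [Scap_succ, Scap_succ]
      have e1 : ∑ l, pert P r last ε r l * (if l = last then 1 else Scap (pert P r last ε) T l last)
          = (1 - ε) * (∑ l, P r l * (if l = last then 1 else Scap (pert P r last ε) T l last))
            + ε * 1 := by
        rw [pert_expand]
        rw [if_pos rfl]
      rw [e1]
      have e2 : ∑ l, P r l * (if l = last then (1:ℝ) else Scap P T l last)
          ≤ ∑ l, P r l * (if l = last then 1 else Scap (pert P r last ε) T l last) :=
        Finset.sum_le_sum fun l _ => mul_le_mul_of_nonneg_left (hhle l) (hP0 r l)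
      have e3 : ∑ l, P r l * (if l = last then (1:ℝ) else Scap P T l last) ≤ 1 := by
        have e3' : ∑ l, P r l * (if l = last then (1:ℝ) else Scap P T l last) ≤ ∑ l, P r l := by
          apply Finset.sum_le_sum
          intro l _
          apply mul_le_of_le_one_right (hP0 r l)
          split
          · exact le_rfl
          · exact Scap_le_one hP0 hP1 T l last
        rw [hP1 r] at e3'
        exact e3'
      nlinarith
    · have hrow : ∑ l, pert P r last ε i l * (if l = last then 1 else Scap (pert P r last ε) T l last)
          = ∑ l, P i l * (if l = last then 1 else Scap (pert P r last ε) T l last) :=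
        Finset.sum_congr rfl (fun l _ => by rw [pert_ne hi])
      rw [Scap_succ, Scap_succ, hrow]
      exact Finset.sum_le_sum fun l _ => mul_le_mul_of_nonneg_left (hhle l) (hP0 i l)

include hP0 hP1 hε0 hε1 in
lemma pert_gap : ∀ T, Scap P (T + 1) r last + ε * (1 - Scap P (T + 1) r last)
    ≤ Scap (pert P r last ε) (T + 1) r last := by
  intro T
  rw [Scap_succ, Scap_succ]
  have e1 : ∑ l, pert P r last ε r l * (if l = last then 1 else Scap (pert P r last ε) T l last)
      = (1 - ε) * (∑ l, P r l * (if l = last then 1 else Scap (pert P r last ε) T l last))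
        + ε * 1 := by
    rw [pert_expand, if_pos rfl]
  rw [e1]
  have e2 : ∑ l, P r l * (if l = last then (1:ℝ) else Scap P T l last)
      ≤ ∑ l, P r l * (if l = last then 1 else Scap (pert P r last ε) T l last) := by
    apply Finset.sum_le_sum
    intro l _
    apply mul_le_mul_of_nonneg_left _ (hP0 r l)
    split
    · exact le_rfl
    · exact pert_Dnonneg hP0 hP1 hε0 hε1 T l
  nlinarith

include hP0 hP1 hpos hn hr hl hε0 hε1 in
lemma pert_pos : ∀ d, d ≤ n - 2 → ∀ T (i : Fin n), i.val = n - 2 - d →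
    Scap P (T + 1 + d) i last < Scap (pert P r last ε) (T + 1 + d) i last := by
  intro d
  induction d with
  | zero =>
    intro _ T i hi
    have hir : i = r := Fin.ext (by omega)
    rw [show i = r from hir]
    have hgap := pert_gap (r := r) (last := last) hP0 hP1 hε0 hε1 T
    have hlt := lemLt1 hP0 hP1 hpos hn (T + 1) r last hl (by omega)
    have harith : T + 1 + 0 = T + 1 := by omega
    rw [harith]
    nlinarith
  | succ d ih =>
    intro hd T i hi
    have hir : i ≠ r := by
      intro h; subst h; omega
    obtain ⟨i', hi'⟩ : ∃ i' : Fin n, i'.val = i.val + 1 := ⟨⟨i.val + 1, by omega⟩, rfl⟩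
    have hi'last : i' ≠ last := by
      intro h; subst h; omega
    have harith : T + 1 + (d + 1) = (T + 1 + d) + 1 := by omega
    have hrow : ∑ l, pert P r last ε i l *
          (if l = last then 1 else Scap (pert P r last ε) (T + 1 + d) l last)
        = ∑ l, P i l * (if l = last then 1 else Scap (pert P r last ε) (T + 1 + d) l last) :=
      Finset.sum_congr rfl (fun l _ => by rw [pert_ne hir])
    rw [harith, Scap_succ, Scap_succ, hrow]
    apply Finset.sum_lt_sum
      (f := fun l => P i l * (if l = last then 1 else Scap P (T + 1 + d) l last))
      (g := fun l => P i l * (if l = last then 1 else Scap (pert P r last ε) (T + 1 + d) l last))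
    · intro l _
      have hb : (if l = last then (1:ℝ) else Scap P (T + 1 + d) l last)
          ≤ (if l = last then 1 else Scap (pert P r last ε) (T + 1 + d) l last) := by
        split
        · exact le_rfl
        · exact pert_Dnonneg hP0 hP1 hε0 hε1 _ l
      exact mul_le_mul_of_nonneg_left hb (hP0 i l)
    · refine ⟨i', Finset.mem_univ i', ?_⟩
      have hb : (if i' = last then (1:ℝ) else Scap P (T + 1 + d) i' last)
          < (if i' = last then 1 else Scap (pert P r last ε) (T + 1 + d) i' last) := by
        rw [if_neg hi'last, if_neg hi'last]
        exact ih (by omega) T i' (by omega)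
      exact mul_lt_mul_of_pos_left hb (hpos i i' (by omega)).1
end pert

theorem key {n : ℕ} {P : Matrix (Fin n) (Fin n) ℝ} (hn : 3 ≤ n) {τ : ℕ} (hτ : n - 1 ≤ τ)
    (hP0 : ∀ a b, 0 ≤ P a b) (hP1 : ∀ a, ∑ b, P a b = 1)
    (hline : ∀ j k : Fin n, (j.val + 1 < k.val ∨ k.val + 1 < j.val) → P j k = 0)
    (hpos : ∀ i j : Fin n, i.val + 1 = j.val → 0 < P i j ∧ 0 < P j i)
    (first last : Fin n) (hf : first.val = 0) (hl : last.val = n - 1)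
    (hC : Scap P τ first last < Scap P τ last first) :
    ∃ Q : Matrix (Fin n) (Fin n) ℝ, (∀ a b, 0 ≤ Q a b) ∧ (∀ a, ∑ b, Q a b = 1) ∧
      (∀ j k : Fin n, (j.val + 1 < k.val ∨ k.val + 1 < j.val) → Q j k = 0) ∧
      ∀ i j : Fin n, Scap P τ first last < Scap Q τ i j := by
  set C1 := Scap P τ first last with hC1
  set C2 := Scap P τ last first with hC2
  have hC10 : 0 ≤ C1 := Scap_nonneg hP0 τ first last
  have hC21 : C2 ≤ 1 := Scap_le_one hP0 hP1 τ last first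
  have hC20 : 0 ≤ C2 := Scap_nonneg hP0 τ last first
  set δ := C2 - C1 with hδdef
  have hδ : 0 < δ := by simp [hδdef]; linarith
  set ε := δ / (2 * ((τ : ℝ) + 1)) with hεdef
  have hden : 0 < 2 * ((τ : ℝ) + 1) := by positivity
  have hε0 : 0 < ε := div_pos hδ hden
  have hεden : ε * (2 * ((τ : ℝ) + 1)) = δ := div_mul_cancel₀ _ (ne_of_gt hden)
  have hε1 : ε ≤ 1 := by nlinarith [Nat.cast_nonneg (α := ℝ) τ]
  obtain ⟨r, hr⟩ : ∃ r : Fin n, r.val = n - 2 := ⟨⟨n - 2, by omega⟩, rfl⟩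
  refine ⟨pert P r last ε, pert_nonneg hP0 hε0 hε1, pert_row hP1,
    pert_line hline hn hr hl, ?_⟩
  intro i j
  -- C1 < C1Q
  have hC1Q : C1 < Scap (pert P r last ε) τ first last := by
    have harith : τ - (n - 1) + 1 + (n - 2) = τ := by omega
    have := pert_pos hP0 hP1 hpos hn hr hl hε0 hε1 (n - 2) le_rfl (τ - (n - 1)) first (by omega)
    rwa [harith] at this
  -- C1 < C2Q
  have hC2Q : C1 < Scap (pert P r last ε) τ last first := by
    have e1 : (1 - ε) ^ τ * C2 ≤ Scap (Matrix.of fun a b => (1 - ε) * P a b) τ last first :=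
      Scap_smul hP0 (by linarith) (by linarith) τ last first
    have e2 : Scap (Matrix.of fun a b => (1 - ε) * P a b) τ last first
        ≤ Scap (pert P r last ε) τ last first := by
      apply Scap_le_Scap _ (pert_ge hP0 hε0 hε1)
      intro a b
      show 0 ≤ (1 - ε) * P a b
      exact mul_nonneg (by linarith) (hP0 a b)
    have hb : 1 - (τ : ℝ) * ε ≤ (1 - ε) ^ τ := by
      have := one_add_mul_le_pow (a := -ε) (by linarith) τ
      calc 1 - (τ : ℝ) * ε = 1 + (τ : ℝ) * (-ε) := by ring
        _ ≤ (1 + -ε) ^ τ := this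
        _ = (1 - ε) ^ τ := by ring_nf
    have hτε : (τ : ℝ) * ε = δ / 2 - ε := by linarith
    have hτεpos : 0 ≤ (τ : ℝ) * ε := mul_nonneg (Nat.cast_nonneg τ) (le_of_lt hε0)
    have h2 : (τ : ℝ) * ε * C2 ≤ (τ : ℝ) * ε := mul_le_of_le_one_right hτεpos hC21
    have h3 : (1 - (τ : ℝ) * ε) * C2 ≤ (1 - ε) ^ τ * C2 :=
      mul_le_mul_of_nonneg_right hb hC20
    nlinarith
  have hmin := step1 (pert_nonneg hP0 hε0 hε1) (pert_row hP1) (pert_line hline hn hr hl)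
    hn hτ first last hf hl i j
  exact lt_of_lt_of_le (lt_min hC1Q hC2Q) hmin

set_option maxHeartbeats 1000000 in
/-- Necessary optimality condition in the line graph: if `P` is an irreducible
row-stochastic line-graph strategy maximizing the worst-case capture probability
(for `n - 1 ≤ τ ≤ 2n - 3`), then the end-to-end capture probabilities in the two
directions are equal: `ℙ(T_1n ≤ τ) = ℙ(T_n1 ≤ τ)`. -/
theorem stmt_15 (n : ℕ) (hn : 3 ≤ n) (τ : ℕ) (hτ1 : n - 1 ≤ τ) (hτ2 : τ ≤ 2 * n - 3)
    (P : Matrix (Fin n) (Fin n) ℝ)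
    (hP0 : ∀ a b, 0 ≤ P a b) (hP1 : ∀ a, ∑ b, P a b = 1)
    (hline : ∀ j k : Fin n, (j.val + 1 < k.val ∨ k.val + 1 < j.val) → P j k = 0)
    (hirr : ∀ a b : Fin n, a ≠ b → ∃ m : ℕ, ∃ v : ℕ → Fin n,
      v 0 = a ∧ v m = b ∧ ∀ t < m, 0 < P (v t) (v (t + 1)))
    (hopt : ∀ Q : Matrix (Fin n) (Fin n) ℝ,
      (∀ a b, 0 ≤ Q a b) → (∀ a, ∑ b, Q a b = 1) →
      (∀ j k : Fin n, (j.val + 1 < k.val ∨ k.val + 1 < j.val) → Q j k = 0) →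
      Finset.univ.inf' ⟨((⟨0, by omega⟩ : Fin n), (⟨0, by omega⟩ : Fin n)), Finset.mem_univ _⟩
          (fun p : Fin n × Fin n => ∑ t ∈ Finset.range τ, hitF Q t p.1 p.2) ≤
        Finset.univ.inf' ⟨((⟨0, by omega⟩ : Fin n), (⟨0, by omega⟩ : Fin n)), Finset.mem_univ _⟩
          (fun p : Fin n × Fin n => ∑ t ∈ Finset.range τ, hitF P t p.1 p.2)) :
    ∑ t ∈ Finset.range τ, hitF P t ⟨0, by omega⟩ ⟨n - 1, by omega⟩ =
      ∑ t ∈ Finset.range τ, hitF P t ⟨n - 1, by omega⟩ ⟨0, by omega⟩ := by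
  have hSapply : ∀ (Q : Matrix (Fin n) (Fin n) ℝ) (a b : Fin n),
      Scap Q τ a b = ∑ t ∈ Finset.range τ, hitF Q t a b := by
    intro Q a b
    simp [Scap, Matrix.sum_apply]
  set first : Fin n := ⟨0, by omega⟩ with hfirst
  set last : Fin n := ⟨n - 1, by omega⟩ with hlast
  rw [← hSapply P first last, ← hSapply P last first]
  have hpos := hpos_of_hirr hline hirr
  have hfr : first.rev = last := Fin.ext (by rw [Fin.val_rev])
  have hlr : last.rev = first := Fin.ext (by rw [Fin.val_rev]; show n - (n - 1 + 1) = 0; omega)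
  rcases lt_trichotomy (Scap P τ first last) (Scap P τ last first) with hC | hC | hC
  · exfalso
    obtain ⟨Q, hQ0, hQ1, hQl, hQgt⟩ := key hn hτ1 hP0 hP1 hline hpos first last rfl rfl hC
    have hco := hopt Q hQ0 hQ1 hQl
    have h1 : Finset.univ.inf'
          ⟨((⟨0, by omega⟩ : Fin n), (⟨0, by omega⟩ : Fin n)), Finset.mem_univ _⟩
          (fun p : Fin n × Fin n => ∑ t ∈ Finset.range τ, hitF P t p.1 p.2)
        ≤ ∑ t ∈ Finset.range τ, hitF P t first last :=
      Finset.inf'_le _ (Finset.mem_univ (first, last))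
    have h2 : Scap P τ first last < Finset.univ.inf'
          ⟨((⟨0, by omega⟩ : Fin n), (⟨0, by omega⟩ : Fin n)), Finset.mem_univ _⟩
          (fun p : Fin n × Fin n => ∑ t ∈ Finset.range τ, hitF Q t p.1 p.2) := by
      apply (Finset.lt_inf'_iff ..).2
      intro p _
      rw [← hSapply Q p.1 p.2]
      exact hQgt p.1 p.2
    rw [← hSapply P first last] at h1
    exact absurd (lt_of_lt_of_le (lt_of_lt_of_le h2 hco) h1) (lt_irrefl _)
  · exact hC
  · exfalso
    have hrev0 := rev_hP0 hP0
    have hrev1 := rev_hP1 hP1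
    have hrevline := rev_hline hline
    have hrevpos := rev_hpos hpos
    have hC' : Scap (P.submatrix Fin.rev Fin.rev) τ first last
        < Scap (P.submatrix Fin.rev Fin.rev) τ last first := by
      rw [Scap_rev, Scap_rev, hfr, hlr]
      exact hC
    obtain ⟨Q', hQ'0, hQ'1, hQ'l, hQ'gt⟩ :=
      key hn hτ1 hrev0 hrev1 hrevline hrevpos first last rfl rfl hC'
    have hQ0 := rev_hP0 hQ'0
    have hQ1 := rev_hP1 hQ'1
    have hQl := rev_hline hQ'l
    have hco := hopt (Q'.submatrix Fin.rev Fin.rev) hQ0 hQ1 hQl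
    have hPrev : Scap (P.submatrix Fin.rev Fin.rev) τ first last = Scap P τ last first := by
      rw [Scap_rev, hfr, hlr]
    have h1 : Finset.univ.inf'
          ⟨((⟨0, by omega⟩ : Fin n), (⟨0, by omega⟩ : Fin n)), Finset.mem_univ _⟩
          (fun p : Fin n × Fin n => ∑ t ∈ Finset.range τ, hitF P t p.1 p.2)
        ≤ ∑ t ∈ Finset.range τ, hitF P t last first :=
      Finset.inf'_le _ (Finset.mem_univ (last, first))
    have h2 : Scap P τ last first < Finset.univ.inf'
          ⟨((⟨0, by omega⟩ : Fin n), (⟨0, by omega⟩ : Fin n)), Finset.mem_univ _⟩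
          (fun p : Fin n × Fin n =>
            ∑ t ∈ Finset.range τ, hitF (Q'.submatrix Fin.rev Fin.rev) t p.1 p.2) := by
      apply (Finset.lt_inf'_iff ..).2
      intro p _
      rw [← hSapply (Q'.submatrix Fin.rev Fin.rev) p.1 p.2, Scap_rev]
      rw [← hPrev]
      exact hQ'gt p.1.rev p.2.rev
    rw [← hSapply P last first] at h1
    exact absurd (lt_of_lt_of_le (lt_of_lt_of_le h2 hco) h1) (lt_irrefl _)
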